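/- Let 0 < a < 1 and let f : ℝ → ℂ be a Schwartz function with C_a(f) < ∞ and C_a(f̂) < ∞. Then for every integer k ≥ 1 the k-th derivative of f satisfies the L² bound ‖D^k f‖_{L²(ℝ)} ≤ (2π)^k (k/(2πa))^{k/2} e^{-k/2} · C_a(f̂). -/

import Mathlib

open MeasureTheory Real Complex FourierTransform ComplexConjugate

lemma plancherel_aux {h : ℝ → ℂ} (hc : Continuous h) (hi : Integrable h)
    (hi' : Integrable (𝓕 h)) :
    ∫ x : ℝ, ‖h x‖ ^ 2 = ∫ ξ : ℝ, ‖𝓕 h ξ‖ ^ 2 := by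
  have hg : Integrable (fun ξ : ℝ => conj (𝓕 h ξ)) := by
    have := (RCLike.conjCLE (K := ℂ)).toContinuousLinearMap.integrable_comp hi'
    simpa using this
  have hconj : 𝓕 (fun ξ : ℝ => conj (𝓕 h ξ)) = fun x : ℝ => conj (h x) := by
    ext x
    have : 𝓕 (fun ξ : ℝ => conj (𝓕 h ξ)) x = conj (𝓕⁻ (𝓕 h) x) := by
      rw [Real.fourier_eq', Real.fourierInv_eq', ← integral_conj]
      congr 1
      ext ξ
      simp only [smul_eq_mul, map_mul, ← Complex.exp_conj, Complex.conj_I,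
        Complex.conj_ofReal]
      push_cast
      ring_nf
    rw [this, hi.fourierInv_fourier_eq hi' hc.continuousAt]
  have key : ∫ ξ : ℝ, (𝓕 h ξ) * conj (𝓕 h ξ) = ∫ x : ℝ, h x * conj (h x) := by
    have := VectorFourier.integral_fourierIntegral_smul_eq_flip (L := innerₗ ℝ)
      Real.continuous_fourierChar continuous_inner hi hg
    rw [flip_innerₗ] at this
    have e1 : VectorFourier.fourierIntegral 𝐞 volume (innerₗ ℝ) h = 𝓕 h := rfl
    have e2 : VectorFourier.fourierIntegral 𝐞 volume (innerₗ ℝ)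
        (fun ξ : ℝ => conj (𝓕 h ξ)) = 𝓕 (fun ξ : ℝ => conj (𝓕 h ξ)) := rfl
    rw [e1, e2, hconj] at this
    simpa [smul_eq_mul] using this
  have lhs : ((∫ x : ℝ, ‖h x‖ ^ 2 : ℝ) : ℂ) = ∫ x : ℝ, h x * conj (h x) := by
    have : ∫ x : ℝ, ((‖h x‖ ^ 2 : ℝ) : ℂ) = ((∫ x : ℝ, ‖h x‖ ^ 2 : ℝ) : ℂ) :=
      integral_ofReal (𝕜 := ℂ)
    rw [← this]
    congr 1; ext x
    simp [Complex.mul_conj, Complex.normSq_eq_norm_sq]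
  have rhs : ((∫ ξ : ℝ, ‖𝓕 h ξ‖ ^ 2 : ℝ) : ℂ) = ∫ ξ : ℝ, (𝓕 h ξ) * conj (𝓕 h ξ) := by
    have : ∫ ξ : ℝ, ((‖𝓕 h ξ‖ ^ 2 : ℝ) : ℂ) = ((∫ ξ : ℝ, ‖𝓕 h ξ‖ ^ 2 : ℝ) : ℂ) :=
      integral_ofReal (𝕜 := ℂ)
    rw [← this]
    congr 1; ext ξ
    simp [Complex.mul_conj, Complex.normSq_eq_norm_sq]
  have := lhs.trans (key.symm.trans rhs.symm)
  exact_mod_cast this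

lemma key_pow_le {c : ℝ} (hc : 0 < c) {k : ℕ} (hk : 1 ≤ k) (t : ℝ) :
    (t ^ 2) ^ k ≤ ((k : ℝ) / c) ^ k * Real.exp (-(k : ℝ)) * Real.exp (c * t ^ 2) := by
  have hkpos : (0 : ℝ) < k := by exact_mod_cast hk
  set x : ℝ := c * t ^ 2 / k with hx
  have hx0 : 0 ≤ x := by positivity
  have h2 : x ≤ Real.exp (x - 1) := by
    have := Real.add_one_le_exp (x - 1); linarith
  have h3 : x ^ k ≤ Real.exp (x - 1) ^ k := pow_le_pow_left₀ hx0 h2 k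
  have h4 : Real.exp (x - 1) ^ k = Real.exp (c * t ^ 2 - k) := by
    rw [← Real.exp_nat_mul]
    congr 1
    rw [hx, mul_sub, mul_div_cancel₀ _ hkpos.ne', mul_one]
  have h5 : (t ^ 2) ^ k = ((k : ℝ) / c) ^ k * x ^ k := by
    rw [← mul_pow]
    congr 1
    rw [hx]
    field_simp
  rw [h5]
  calc ((k : ℝ) / c) ^ k * x ^ k ≤ ((k : ℝ) / c) ^ k * Real.exp (c * t ^ 2 - k) := by
        apply mul_le_mul_of_nonneg_left _ (by positivity)
        rw [← h4]; exact h3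
    _ = ((k : ℝ) / c) ^ k * Real.exp (-(k : ℝ)) * Real.exp (c * t ^ 2) := by
        rw [mul_assoc, ← Real.exp_add]; ring_nf


/-- `L²` bound on the `k`-th derivative of a Schwartz function belonging to the
Gaussian-weighted class:
`‖D^k f‖_{L²} ≤ (2π)^k (k/(2πa))^{k/2} e^{-k/2} C_a(f̂)`. -/
theorem stmt_2 (a : ℝ) (ha0 : 0 < a) (ha1 : a < 1) (f : SchwartzMap ℝ ℂ)
    (hCf : Integrable (fun x : ℝ => ‖f x‖ ^ 2 * Real.exp (2 * a * π * x ^ 2)))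
    (hCfhat : Integrable (fun ξ : ℝ =>
      ‖FourierTransform.fourier (⇑f : ℝ → ℂ) ξ‖ ^ 2 * Real.exp (2 * a * π * ξ ^ 2))) :
    ∀ k : ℕ, 1 ≤ k →
      (∫ x : ℝ, ‖iteratedDeriv k (⇑f) x‖ ^ 2) ^ ((1 : ℝ) / 2) ≤
        (2 * π) ^ k * ((k : ℝ) / (2 * π * a)) ^ ((k : ℝ) / 2) * Real.exp (-(k : ℝ) / 2) *
          (∫ ξ : ℝ, ‖FourierTransform.fourier (⇑f : ℝ → ℂ) ξ‖ ^ 2 *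
            Real.exp (2 * a * π * ξ ^ 2)) ^ ((1 : ℝ) / 2) := by
  intro k hk
  have hkpos : (0 : ℝ) < k := by exact_mod_cast hk
  -- iterated derivatives of Schwartz maps
  have hder_eq : ∀ n : ℕ,
      ⇑((SchwartzMap.derivCLM ℝ (F := ℂ))^[n] f) = iteratedDeriv n ⇑f := by
    intro n
    induction n with
    | zero => simp [iteratedDeriv_zero]
    | succ n ih =>
      rw [Function.iterate_succ_apply', iteratedDeriv_succ]
      ext x
      rw [SchwartzMap.derivCLM_apply, ih]
  have hder : ∀ n : ℕ, Integrable (iteratedDeriv n ⇑f) := by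
    intro n
    rw [← hder_eq n]
    exact SchwartzMap.integrable _
  set h : ℝ → ℂ := iteratedDeriv k ⇑f with hh
  have hc : Continuous h := by
    rw [hh, ← hder_eq k]; exact SchwartzMap.continuous _
  have hi : Integrable h := hder k
  have hFh : 𝓕 h = fun ξ : ℝ => (2 * ↑π * Complex.I * (ξ : ℂ)) ^ k • 𝓕 ⇑f ξ := by
    exact Real.fourier_iteratedDeriv (N := ⊤) (f.smooth ⊤)
      (fun n _ => hder n) le_top
  have hnorm : ∀ ξ : ℝ, ‖(2 * ↑π * Complex.I * (ξ : ℂ)) ^ k • 𝓕 ⇑f ξ‖ =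
      (2 * π) ^ k * (‖ξ‖ ^ k * ‖𝓕 ⇑f ξ‖) := by
    intro ξ
    have base : ‖(2 * ↑π * Complex.I * (ξ : ℂ))‖ = 2 * π * ‖ξ‖ := by
      simp [norm_mul, Complex.norm_I, Complex.norm_real, abs_of_pos Real.pi_pos,
        Real.norm_eq_abs]
    rw [norm_smul, norm_pow, base, mul_pow]
    ring
  have hF : ⇑(SchwartzMap.fourierTransformCLM ℂ f) = 𝓕 ⇑f :=
    SchwartzMap.fourier_coe f
  have hi' : Integrable (𝓕 h) := by
    rw [hFh]
    apply Integrable.mono'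
      (((SchwartzMap.fourierTransformCLM ℂ f).integrable_pow_mul (volume) k).const_mul
        ((2 * π) ^ k))
    · apply Continuous.aestronglyMeasurable
      exact ((continuous_const.mul Complex.continuous_ofReal).pow k).smul
        (hF ▸ (SchwartzMap.fourierTransformCLM ℂ f).continuous)
    · filter_upwards with ξ
      rw [hnorm ξ, hF]
  -- Plancherel
  have hple : ∫ x : ℝ, ‖h x‖ ^ 2 = ∫ ξ : ℝ, ‖𝓕 h ξ‖ ^ 2 := plancherel_aux hc hi hi'
  set C : ℝ := (2 * π) ^ k * ((k : ℝ) / (2 * π * a)) ^ ((k : ℝ) / 2) *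
      Real.exp (-(k : ℝ) / 2) with hCdef
  have hrpos : (0 : ℝ) < (k : ℝ) / (2 * π * a) := by positivity
  have hCnonneg : 0 ≤ C := by positivity
  have hC2 : C ^ 2 = (2 * π) ^ (2 * k) * (((k : ℝ) / (2 * π * a)) ^ k *
      Real.exp (-(k : ℝ))) := by
    have h1 : ((k : ℝ) / (2 * π * a)) ^ ((k : ℝ) / 2) *
        ((k : ℝ) / (2 * π * a)) ^ ((k : ℝ) / 2) = ((k : ℝ) / (2 * π * a)) ^ k := by
      rw [← Real.rpow_add hrpos]
      rw [show (k : ℝ) / 2 + (k : ℝ) / 2 = (k : ℝ) by ring, Real.rpow_natCast]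
    have h2 : Real.exp (-(k : ℝ) / 2) * Real.exp (-(k : ℝ) / 2) =
        Real.exp (-(k : ℝ)) := by
      rw [← Real.exp_add]; congr 1; ring
    have h3 : ((2 * π) ^ k : ℝ) * (2 * π) ^ k = (2 * π) ^ (2 * k) := by
      rw [← pow_add]; congr 1; ring
    calc C ^ 2 = ((2 * π) ^ k * (2 * π) ^ k) *
          (((k : ℝ) / (2 * π * a)) ^ ((k : ℝ) / 2) *
            ((k : ℝ) / (2 * π * a)) ^ ((k : ℝ) / 2)) *
          (Real.exp (-(k : ℝ) / 2) * Real.exp (-(k : ℝ) / 2)) := by rw [hCdef]; ring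
      _ = _ := by rw [h1, h2, h3]; ring
  -- pointwise bound and integral comparison
  have hbound : ∫ x : ℝ, ‖h x‖ ^ 2 ≤
      C ^ 2 * ∫ ξ : ℝ, ‖𝓕 ⇑f ξ‖ ^ 2 * Real.exp (2 * a * π * ξ ^ 2) := by
    rw [hple, ← integral_const_mul]
    apply integral_mono_of_nonneg
    · filter_upwards with ξ; positivity
    · exact hCfhat.const_mul _
    · filter_upwards with ξ
      have e1 : ‖𝓕 h ξ‖ ^ 2 = (2 * π) ^ (2 * k) * ((ξ ^ 2) ^ k * ‖𝓕 ⇑f ξ‖ ^ 2) := by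
        rw [hFh]
        simp only
        rw [hnorm ξ]
        have : (‖ξ‖ ^ k) ^ 2 = (ξ ^ 2) ^ k := by
          rw [← pow_mul, mul_comm k 2, pow_mul, Real.norm_eq_abs, _root_.sq_abs]
        calc ((2 * π) ^ k * (‖ξ‖ ^ k * ‖𝓕 ⇑f ξ‖)) ^ 2
            = ((2 * π) ^ k) ^ 2 * ((‖ξ‖ ^ k) ^ 2 * ‖𝓕 ⇑f ξ‖ ^ 2) := by ring
          _ = (2 * π) ^ (2 * k) * ((ξ ^ 2) ^ k * ‖𝓕 ⇑f ξ‖ ^ 2) := by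
              rw [this, ← pow_mul, mul_comm k 2]
      rw [e1, hC2]
      have hkey := key_pow_le (c := 2 * π * a) (by positivity) hk ξ
      calc (2 * π) ^ (2 * k) * ((ξ ^ 2) ^ k * ‖𝓕 ⇑f ξ‖ ^ 2)
          ≤ (2 * π) ^ (2 * k) * ((((k : ℝ) / (2 * π * a)) ^ k * Real.exp (-(k : ℝ)) *
              Real.exp (2 * π * a * ξ ^ 2)) * ‖𝓕 ⇑f ξ‖ ^ 2) := by
            gcongr
        _ = (2 * π) ^ (2 * k) * (((k : ℝ) / (2 * π * a)) ^ k * Real.exp (-(k : ℝ))) *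
              (‖𝓕 ⇑f ξ‖ ^ 2 * Real.exp (2 * a * π * ξ ^ 2)) := by
            rw [show 2 * π * a * ξ ^ 2 = 2 * a * π * ξ ^ 2 by ring]; ring
  -- take square roots
  have hInn : 0 ≤ ∫ ξ : ℝ, ‖𝓕 ⇑f ξ‖ ^ 2 * Real.exp (2 * a * π * ξ ^ 2) :=
    integral_nonneg fun ξ => by positivity
  have hLnn : 0 ≤ ∫ x : ℝ, ‖h x‖ ^ 2 := integral_nonneg fun x => by positivity
  have hfinal := Real.rpow_le_rpow hLnn hbound (by norm_num : (0:ℝ) ≤ 1/2)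
  calc (∫ x : ℝ, ‖h x‖ ^ 2) ^ ((1:ℝ)/2)
      ≤ (C ^ 2 * ∫ ξ : ℝ, ‖𝓕 ⇑f ξ‖ ^ 2 * Real.exp (2 * a * π * ξ ^ 2)) ^ ((1:ℝ)/2) :=
        hfinal
    _ = C * (∫ ξ : ℝ, ‖𝓕 ⇑f ξ‖ ^ 2 * Real.exp (2 * a * π * ξ ^ 2)) ^ ((1:ℝ)/2) := by
        rw [Real.mul_rpow (sq_nonneg C) hInn]
        congr 1
        rw [← Real.rpow_natCast C 2, ← Real.rpow_mul hCnonneg]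
        norm_num
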